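/- arXiv:1807.05834 — 2 statements merged into one kernel-verified Lean document; each statement's English description precedes it below -/
import Mathlib

section
/- Let p₁, …, p_P be points in ℝⁿ and for each i let g_i : ℝ≥0 → ℝ be a monotonically nondecreasing function (interpreted as g_i(r) = -log p(m_i | r)). Define f(q) = Σ_i g_i(‖p_i - q‖). Then f attains its infimum over ℝⁿ at some point of the convex hull of {p₁, …, p_P}; more precisely, for every q ∉ conv{p₁,…,p_P}, the metric projection q' of q onto the convex hull satisfies f(q') ≤ f(q). -/
open scoped RealInnerProductSpace

theorem stmt_3 {n P : ℕ} (p : Fin P → EuclideanSpace ℝ (Fin n))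
    (g : Fin P → NNReal → ℝ) (hg : ∀ i, Monotone (g i)) :
    ∀ q ∉ convexHull ℝ (Set.range p),
      ∀ q' ∈ convexHull ℝ (Set.range p),
        (∀ x ∈ convexHull ℝ (Set.range p), dist q q' ≤ dist q x) →
        (∑ i, g i ‖p i - q'‖₊) ≤ ∑ i, g i ‖p i - q‖₊ := by
  intro q hq q' hq' hmin
  set K := convexHull ℝ (Set.range p) with hK
  have hconv : Convex ℝ K := convex_convexHull ℝ _
  have hne : Nonempty K := ⟨⟨q', hq'⟩⟩
  have hiInf : ‖q - q'‖ = ⨅ w : K, ‖q - w‖ := by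
    apply le_antisymm
    · exact le_ciInf fun w => by
        simpa [dist_eq_norm] using hmin w w.2
    · exact ciInf_le ⟨0, fun x ⟨w, hw⟩ => hw ▸ norm_nonneg _⟩ (⟨q', hq'⟩ : K)
  have hinner : ∀ w ∈ K, ⟪q - q', w - q'⟫ ≤ 0 :=
    (norm_eq_iInf_iff_real_inner_le_zero hconv hq').mp hiInf
  have hdist : ∀ i, ‖p i - q'‖ ≤ ‖p i - q‖ := by
    intro i
    have hpK : p i ∈ K := subset_convexHull ℝ _ ⟨i, rfl⟩
    have h1 : ⟪q - q', p i - q'⟫ ≤ 0 := hinner _ hpK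
    have hexp : ‖p i - q‖ ^ 2 =
        ‖p i - q'‖ ^ 2 - 2 * ⟪p i - q', q - q'⟫ + ‖q - q'‖ ^ 2 := by
      have := @norm_sub_sq_real (EuclideanSpace ℝ (Fin n)) _ _ (p i - q') (q - q')
      simpa [sub_sub_sub_cancel_right] using this
    have h2 : ⟪p i - q', q - q'⟫ ≤ 0 := by
      rwa [real_inner_comm] at h1
    have hsq : ‖p i - q'‖ ^ 2 ≤ ‖p i - q‖ ^ 2 := by
      rw [hexp]; nlinarith [sq_nonneg ‖q - q'‖]
    nlinarith [hsq, norm_nonneg (p i - q'), norm_nonneg (p i - q)]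
  apply Finset.sum_le_sum
  intro i _
  exact hg i (by simpa [← NNReal.coe_le_coe, coe_nnnorm] using hdist i)
end

section
/- Let p₁, …, p_P ∈ ℝⁿ and g_i : ℝ≥0 → ℝ strictly increasing functions. Define f(q) = Σ_i g_i(‖p_i - q‖). If q* minimizes f over ℝⁿ, then q* lies in the convex hull of {p₁, …, p_P}. -/
theorem stmt_4 {n P : ℕ} (hP : 0 < P) (p : Fin P → EuclideanSpace ℝ (Fin n))
    (g : Fin P → NNReal → ℝ) (hg : ∀ i, StrictMono (g i))
    (q : EuclideanSpace ℝ (Fin n))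
    (hq : ∀ x, (∑ i, g i ‖p i - q‖₊) ≤ ∑ i, g i ‖p i - x‖₊) :
    q ∈ convexHull ℝ (Set.range p) := by
  by_contra hqK
  set K := convexHull ℝ (Set.range p) with hK
  have hconv : Convex ℝ K := convex_convexHull ℝ _
  have hcompact : IsCompact K := (Set.finite_range p).isCompact_convexHull ℝ
  have hne : K.Nonempty :=
    ⟨p ⟨0, hP⟩, subset_convexHull ℝ _ (Set.mem_range_self _)⟩
  have hcomplete : IsComplete K := hcompact.isClosed.isComplete
  obtain ⟨v, hvK, hv⟩ := exists_norm_eq_iInf_of_complete_convex hne hcomplete hconv q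
  have hinner : ∀ w ∈ K, (inner ℝ (q - v) (w - v) : ℝ) ≤ 0 :=
    (norm_eq_iInf_iff_real_inner_le_zero hconv hvK).mp hv
  have hqv : q ≠ v := fun h => hqK (h ▸ hvK)
  have key : ∀ i, ‖p i - v‖₊ < ‖p i - q‖₊ := by
    intro i
    have hpK : p i ∈ K := subset_convexHull ℝ _ (Set.mem_range_self i)
    have h1 : (inner ℝ (q - v) (p i - v) : ℝ) ≤ 0 := hinner _ hpK
    have hnorm : ‖p i - v‖ < ‖p i - q‖ := by
      have hsq : ‖p i - v‖ ^ 2 < ‖p i - q‖ ^ 2 := by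
        have heq : p i - q = (p i - v) - (q - v) := by abel
        have hexp := norm_sub_sq_real (p i - v) (q - v)
        have hpos : 0 < ‖q - v‖ ^ 2 :=
          pow_pos (norm_pos_iff.mpr (sub_ne_zero.mpr hqv)) 2
        rw [heq, hexp]
        nlinarith [real_inner_comm (q - v) (p i - v)]
      exact lt_of_pow_lt_pow_left₀ 2 (norm_nonneg _) hsq
    rwa [← NNReal.coe_lt_coe, coe_nnnorm, coe_nnnorm]
  have hlt : (∑ i, g i ‖p i - v‖₊) < ∑ i, g i ‖p i - q‖₊ := by
    apply Finset.sum_lt_sum_of_nonempty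
    · exact Finset.univ_nonempty_iff.mpr ⟨⟨0, hP⟩⟩
    · intro i _
      exact hg i (key i)
  exact absurd (hq v) (not_le.mpr hlt)
end
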